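/- In the K-user polyhedral TIN region characterization, the cycle conditions through the auxiliary vertex u combined with the two-hop cycles imply all mixed-cycle conditions are redundant: if d_k ≤ α_{kk}^{[l_k]} for all k and states l_k, and for every cyclic sequence (i_1,...,i_m) of distinct users and every choice of states, ∑_{j=1}^m d_{i_j} ≤ ∑_{j=1}^m (α_{i_j i_j}^{[l_{i_j}]} − α_{i_j i_{j+1}}^{[l_{i_j}]}) (indices mod m), then every directed cycle in the full potential graph (including those passing through u and repeating user-vertices via zero-length same-user edges) has nonnegative length. -/

import Mathlib

section MCRAux

variable {K : ℕ} {S : Fin K → Type} [∀ k, Fintype (S k)] [∀ k, Nonempty (S k)]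

/-- reduced edge weight between users, minimized over states -/
noncomputable def mcrW (α : (k : Fin K) → S k → Fin K → ℝ) (d : Fin K → ℝ)
    (k j : Fin K) : ℝ :=
  Finset.univ.inf' Finset.univ_nonempty (fun l : S k => α k l k - α k l j - d k)

/-- reduced weight of edge to the auxiliary vertex -/
noncomputable def mcrA (α : (k : Fin K) → S k → Fin K → ℝ) (d : Fin K → ℝ)
    (k : Fin K) : ℝ :=
  Finset.univ.inf' Finset.univ_nonempty (fun l : S k => α k l k - d k)

lemma mcrW_attained (α : (k : Fin K) → S k → Fin K → ℝ) (d : Fin K → ℝ) (k j : Fin K) :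
    ∃ l : S k, mcrW α d k j = α k l k - α k l j - d k := by
  obtain ⟨l, _, hl⟩ := Finset.exists_mem_eq_inf' (Finset.univ_nonempty (α := S k))
    (fun l : S k => α k l k - α k l j - d k)
  exact ⟨l, hl⟩

lemma mcrW_le (α : (k : Fin K) → S k → Fin K → ℝ) (d : Fin K → ℝ) (k j : Fin K) (l : S k) :
    mcrW α d k j ≤ α k l k - α k l j - d k :=
  Finset.inf'_le _ (Finset.mem_univ l)

lemma mcrA_le (α : (k : Fin K) → S k → Fin K → ℝ) (d : Fin K → ℝ) (k : Fin K) (l : S k) :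
    mcrA α d k ≤ α k l k - d k :=
  Finset.inf'_le _ (Finset.mem_univ l)

lemma mcrW_le_mcrA (α : (k : Fin K) → S k → Fin K → ℝ) (d : Fin K → ℝ)
    (hpos : ∀ (k : Fin K) (l : S k) (j : Fin K), 0 ≤ α k l j) (k j : Fin K) :
    mcrW α d k j ≤ mcrA α d k := by
  obtain ⟨l, hl⟩ : ∃ l : S k, mcrA α d k = α k l k - d k := by
    obtain ⟨l, _, hl⟩ := Finset.exists_mem_eq_inf' (Finset.univ_nonempty (α := S k))
      (fun l : S k => α k l k - d k)
    exact ⟨l, hl⟩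
  have := mcrW_le α d k j l
  have := hpos k l j
  linarith

lemma mcrA_nonneg (α : (k : Fin K) → S k → Fin K → ℝ) (d : Fin K → ℝ)
    (hsingle : ∀ (k : Fin K) (lk : S k), d k ≤ α k lk k) (k : Fin K) :
    0 ≤ mcrA α d k := by
  apply Finset.le_inf'
  intro l _
  have := hsingle k l
  linarith

/-- sum of reduced edge weights along a path a :: L -/
noncomputable def mcrE (α : (k : Fin K) → S k → Fin K → ℝ) (d : Fin K → ℝ) :
    Fin K → List (Fin K) → ℝ
  | _, [] => 0
  | a, b :: t => mcrW α d a b + mcrE α d b t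

/-- last vertex of the path a :: L -/
def mcrL : Fin K → List (Fin K) → Fin K
  | a, [] => a
  | _, b :: t => mcrL b t

/-- n-th vertex of the path a :: L (garbage past the end) -/
def mcrG : Fin K → List (Fin K) → ℕ → Fin K
  | a, _, 0 => a
  | a, [], _+1 => a
  | _, b :: t, n+1 => mcrG b t n

variable (α : (k : Fin K) → S k → Fin K → ℝ) (d : Fin K → ℝ)

lemma mcrG_mem : ∀ (L : List (Fin K)) (a : Fin K) (n : ℕ), n ≤ L.length →
    mcrG a L n ∈ a :: L := by
  intro L
  induction L with
  | nil =>
    intro a n hn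
    have : n = 0 := by simpa using hn
    subst this
    simp [mcrG]
  | cons b t ih =>
    intro a n hn
    cases n with
    | zero => simp [mcrG]
    | succ n =>
      have := ih b n (by simpa using hn)
      simp only [mcrG]
      exact List.mem_cons_of_mem _ this

lemma mcrG_inj : ∀ (L : List (Fin K)) (a : Fin K), (a :: L).Nodup →
    ∀ i j : ℕ, i ≤ L.length → j ≤ L.length → mcrG a L i = mcrG a L j → i = j := by
  intro L
  induction L with
  | nil => intro a _ i j hi hj _; simp only [List.length_nil, Nat.le_zero] at hi hj; omega
  | cons b t ih =>
    intro a hnd i j hi hj hij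
    have hnd' : (b :: t).Nodup := hnd.of_cons
    have ha : a ∉ b :: t := by
      simpa using (List.nodup_cons.mp hnd).1
    cases i with
    | zero =>
      cases j with
      | zero => rfl
      | succ j =>
        exfalso
        have hm : mcrG b t j ∈ b :: t := mcrG_mem t b j (by simpa using hj)
        have : mcrG a (b :: t) 0 = a := rfl
        have : a = mcrG b t j := by simpa [mcrG] using hij
        exact ha (this ▸ hm)
    | succ i =>
      cases j with
      | zero =>
        exfalso
        have hm : mcrG b t i ∈ b :: t := mcrG_mem t b i (by simpa using hi)
        have : mcrG b t i = a := by simpa [mcrG] using hij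
        exact ha (this ▸ hm)
      | succ j =>
        have : mcrG b t i = mcrG b t j := by simpa [mcrG] using hij
        have := ih b hnd' i j (by simpa using hi) (by simpa using hj) this
        omega

lemma mcrG_zero (a : Fin K) (L : List (Fin K)) : mcrG a L 0 = a := by
  cases L <;> rfl

lemma mcrG_last : ∀ (L : List (Fin K)) (a : Fin K), mcrG a L L.length = mcrL a L := by
  intro L
  induction L with
  | nil => intro a; rfl
  | cons b t ih => intro a; simpa [mcrG, mcrL] using ih b

lemma mcrE_sum : ∀ (L : List (Fin K)) (a : Fin K),
    ∑ j : Fin L.length, mcrW α d (mcrG a L j.val) (mcrG a L (j.val + 1)) = mcrE α d a L := by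
  intro L
  induction L with
  | nil => intro a; simp [mcrE]
  | cons b t ih =>
    intro a
    rw [show (b :: t).length = t.length + 1 from rfl, Fin.sum_univ_succ]
    have h0 : mcrG a (b :: t) (0 : Fin (t.length + 1)).val = a := by
      simp [mcrG]
    have h1 : mcrG a (b :: t) ((0 : Fin (t.length + 1)).val + 1) = b := by
      simp [mcrG, mcrG_zero]
    rw [h0, h1]
    have hrest : ∀ j : Fin t.length,
        mcrW α d (mcrG a (b :: t) (j.succ.val)) (mcrG a (b :: t) (j.succ.val + 1))
          = mcrW α d (mcrG b t j.val) (mcrG b t (j.val + 1)) := by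
      intro j
      simp [mcrG, Fin.val_succ]
    rw [Finset.sum_congr rfl (fun j _ => hrest j), ih b]
    rfl

lemma mcrE_append_singleton : ∀ (L : List (Fin K)) (a b : Fin K),
    mcrE α d a (L ++ [b]) = mcrE α d a L + mcrW α d (mcrL a L) b := by
  intro L
  induction L with
  | nil => intro a b; simp [mcrE, mcrL]
  | cons c t ih =>
    intro a b
    simp only [List.cons_append, List.append_eq, mcrE, mcrL]
    rw [ih c]
    ring

lemma mcrL_append_singleton : ∀ (L : List (Fin K)) (a b : Fin K),
    mcrL a (L ++ [b]) = b := by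
  intro L
  induction L with
  | nil => intro a b; rfl
  | cons c t ih => intro a b; simpa [mcrL] using ih c b

lemma mcrE_append_cons : ∀ (L : List (Fin K)) (a b : Fin K) (M : List (Fin K)),
    mcrE α d a (L ++ b :: M) = mcrE α d a (L ++ [b]) + mcrE α d b M := by
  intro L
  induction L with
  | nil => intro a b M; simp [mcrE]
  | cons c t ih =>
    intro a b M
    simp only [List.cons_append, List.append_eq, mcrE]
    rw [ih c]
    ring

lemma mcrL_append_cons : ∀ (L : List (Fin K)) (a b : Fin K) (M : List (Fin K)),
    mcrL a (L ++ b :: M) = mcrL b M := by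
  intro L
  induction L with
  | nil => intro a b M; rfl
  | cons c t ih => intro a b M; simpa [mcrL] using ih c b M

end MCRAux

theorem mixed_cycles_redundant
    (K : ℕ) (S : Fin K → Type) [∀ k, Fintype (S k)] [∀ k, Nonempty (S k)]
    (α : (k : Fin K) → S k → Fin K → ℝ)
    (hpos : ∀ (k : Fin K) (l : S k) (j : Fin K), 0 ≤ α k l j)
    (d : Fin K → ℝ)
    (len : ((Σ k : Fin K, S k) ⊕ Unit) → ((Σ k : Fin K, S k) ⊕ Unit) → ℝ)
    (h1a : ∀ (k : Fin K) (lk lk' : S k), len (.inl ⟨k, lk⟩) (.inl ⟨k, lk'⟩) = 0)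
    (h1b : ∀ (k j : Fin K) (lk : S k) (lj : S j), k ≠ j →
      len (.inl ⟨k, lk⟩) (.inl ⟨j, lj⟩) = (α k lk k - α k lk j) - d k)
    (h1c : ∀ (k : Fin K) (lk : S k), len (.inl ⟨k, lk⟩) (.inr ()) = α k lk k - d k)
    (h1d : ∀ (k : Fin K) (lk : S k), len (.inr ()) (.inl ⟨k, lk⟩) = 0)
    (h1e : len (.inr ()) (.inr ()) = 0)
    (hsingle : ∀ (k : Fin K) (lk : S k), d k ≤ α k lk k)
    (hcyclic : ∀ (m : ℕ) (i : Fin (m + 2) → Fin K), Function.Injective i →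
      ∀ ls : (j : Fin (m + 2)) → S (i j),
        ∑ j : Fin (m + 2), d (i j) ≤
          ∑ j : Fin (m + 2), (α (i j) (ls j) (i j) - α (i j) (ls j) (i (j + 1)))) :
    ∀ (m : ℕ) (c : Fin (m + 1) → ((Σ k : Fin K, S k) ⊕ Unit)), c 0 = c (Fin.last m) →
      0 ≤ ∑ i : Fin m, len (c i.castSucc) (c i.succ) := by
  classical
  -- Step 1: every simple user cycle (in the reduced graph) has nonnegative weight
  have cyc : ∀ (t : List (Fin K)) (a b : Fin K), (a :: b :: t).Nodup →
      0 ≤ mcrE α d a (b :: t) + mcrW α d (mcrL a (b :: t)) a := by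
    intro t a b hnd
    set L : List (Fin K) := b :: t with hL
    set m : ℕ := t.length with hm
    have hlen : L.length = m + 1 := rfl
    set i : Fin (m + 2) → Fin K := fun j => mcrG a L j.val with hi
    have hinj : Function.Injective i := by
      intro j1 j2 h
      have h1 : (j1 : ℕ) ≤ L.length := by rw [hlen]; omega
      have h2 : (j2 : ℕ) ≤ L.length := by rw [hlen]; omega
      have := mcrG_inj L a hnd j1.val j2.val h1 h2 h
      exact Fin.ext this
    set ls : (j : Fin (m + 2)) → S (i j) :=
      fun j => (mcrW_attained α d (i j) (i (j + 1))).choose with hls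
    have hlsspec : ∀ j : Fin (m + 2),
        mcrW α d (i j) (i (j + 1)) = α (i j) (ls j) (i j) - α (i j) (ls j) (i (j + 1)) - d (i j) :=
      fun j => (mcrW_attained α d (i j) (i (j + 1))).choose_spec
    have hc := hcyclic m i hinj ls
    have hsum : ∑ j : Fin (m + 2), mcrW α d (i j) (i (j + 1))
        = (∑ j : Fin (m + 2), (α (i j) (ls j) (i j) - α (i j) (ls j) (i (j + 1))))
          - ∑ j : Fin (m + 2), d (i j) := by
      rw [← Finset.sum_sub_distrib]
      exact Finset.sum_congr rfl fun j _ => hlsspec j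
    have hnn : 0 ≤ ∑ j : Fin (m + 2), mcrW α d (i j) (i (j + 1)) := by
      rw [hsum]; linarith
    -- now identify the Fin-indexed cyclic sum with the list sum
    have hsplit : ∑ j : Fin (m + 2), mcrW α d (i j) (i (j + 1))
        = (∑ j : Fin (m + 1), mcrW α d (i j.castSucc) (i (j.castSucc + 1)))
          + mcrW α d (i (Fin.last (m + 1))) (i (Fin.last (m + 1) + 1)) := by
      rw [Fin.sum_univ_castSucc]
    have hlast1 : i (Fin.last (m + 1)) = mcrL a L := by
      show mcrG a L (Fin.last (m + 1)).val = mcrL a L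
      rw [Fin.val_last, ← hlen]
      exact mcrG_last L a
    have hlast2 : i (Fin.last (m + 1) + 1) = a := by
      show mcrG a L (Fin.last (m + 1) + 1).val = a
      have : (Fin.last (m + 1) + 1 : Fin (m + 2)) = 0 := by
        rw [Fin.last_add_one]
      rw [this]
      exact mcrG_zero a L
    have hmid : ∀ j : Fin (m + 1),
        mcrW α d (i j.castSucc) (i (j.castSucc + 1))
          = mcrW α d (mcrG a L j.val) (mcrG a L (j.val + 1)) := by
      intro j
      have hv : ((j.castSucc + 1 : Fin (m + 2)) : ℕ) = j.val + 1 := by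
        have : ((j.castSucc + 1 : Fin (m + 2)) : ℕ) = (j.val + 1) % (m + 2) := by
          simp [Fin.add_def]
        rw [this, Nat.mod_eq_of_lt (by omega)]
      show mcrW α d (mcrG a L j.castSucc.val) (mcrG a L ((j.castSucc + 1 : Fin (m+2)) : ℕ))
        = _
      rw [hv, Fin.coe_castSucc]
    have hEsum : ∑ j : Fin (m + 1), mcrW α d (mcrG a L j.val) (mcrG a L (j.val + 1))
        = mcrE α d a L := by
      have := mcrE_sum α d L a
      rw [hlen] at this
      convert this using 1
    rw [hsplit, Finset.sum_congr rfl (fun j _ => hmid j), hEsum, hlast1, hlast2] at hnn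
    exact hnn
  -- Step 2: the potential q k = shortest simple-path distance from k to u
  set wt : Fin K → List (Fin K) → ℝ :=
    fun k L => mcrE α d k L + mcrA α d (mcrL k L) with hwt
  set Sset : Fin K → Set ℝ := fun k => (wt k) '' {L | (k :: L).Nodup} with hSset
  have hfin : ∀ k, (Sset k).Finite := by
    intro k
    apply Set.Finite.image
    apply Set.Finite.subset (List.finite_length_le (Fin K) K)
    intro L hL
    have : (k :: L).Nodup := hL
    have hlen : (k :: L).length ≤ Fintype.card (Fin K) := this.length_le_card
    simp only [List.length_cons, Fintype.card_fin] at hlen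
    simp only [Set.mem_setOf_eq]
    omega
  have hne : ∀ k, (Sset k).Nonempty := by
    intro k
    exact ⟨wt k [], ⟨[], by simp, rfl⟩⟩
  set q : Fin K → ℝ := fun k => sInf (Sset k) with hq
  have q_le : ∀ (k : Fin K) (L : List (Fin K)), (k :: L).Nodup → q k ≤ wt k L := by
    intro k L h
    exact csInf_le (hfin k).bddBelow ⟨L, h, rfl⟩
  have q_mem : ∀ k, ∃ L, (k :: L).Nodup ∧ q k = wt k L := by
    intro k
    have := (hne k).csInf_mem (hfin k)
    obtain ⟨L, hL, hval⟩ := this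
    exact ⟨L, hL, hval.symm⟩
  have q_le_A : ∀ k, q k ≤ mcrA α d k := by
    intro k
    have := q_le k [] (by simp)
    simpa [hwt, mcrE, mcrL] using this
  have wt_nonneg : ∀ (k : Fin K) (L : List (Fin K)), (k :: L).Nodup → 0 ≤ wt k L := by
    intro k L hnd
    cases L with
    | nil =>
      have := mcrA_nonneg α d hsingle k
      simpa [hwt, mcrE, mcrL] using this
    | cons b t =>
      have h1 : mcrW α d (mcrL k (b :: t)) k ≤ mcrA α d (mcrL k (b :: t)) :=
        mcrW_le_mcrA α d hpos _ _
      have h2 := cyc t k b hnd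
      simp only [hwt]
      linarith
  have q_nonneg : ∀ k, 0 ≤ q k := by
    intro k
    apply le_csInf (hne k)
    rintro r ⟨L, hL, rfl⟩
    exact wt_nonneg k L hL
  have q_tri : ∀ k j : Fin K, k ≠ j → q k ≤ mcrW α d k j + q j := by
    intro k j hkj
    obtain ⟨L, hnd, hval⟩ := q_mem j
    by_cases hk : k ∈ j :: L
    · -- k occurs on the optimal path from j; cut the cycle
      have hkL : k ∈ L := by
        rcases List.mem_cons.mp hk with h | h
        · exact absurd h hkj
        · exact h
      obtain ⟨pre, suf, hsplit⟩ := List.append_of_mem hkL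
      subst hsplit
      have hnd2 : (j :: pre ++ k :: suf).Nodup := by simpa using hnd
      have hksuf : (k :: suf).Nodup := by
        have : (k :: suf).Sublist (j :: pre ++ k :: suf) := by
          have h1 : (k :: suf).Sublist (pre ++ k :: suf) := List.sublist_append_right _ _
          exact h1.trans (List.sublist_cons_self _ _)
        exact this.nodup hnd2
      have hjpre : (j :: pre).Nodup := by
        have : (j :: pre).Sublist (j :: pre ++ k :: suf) := by
          have : ((j :: pre) ++ (k :: suf)) = j :: pre ++ k :: suf := by simp
          rw [← this]
          exact List.sublist_append_left _ _
        exact this.nodup hnd2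
      have hknotjpre : k ∉ j :: pre := by
        intro hmem
        rcases List.mem_cons.mp hmem with h | h
        · exact hkj h
        · -- k ∈ pre contradicts nodup of pre ++ k :: suf
          have : (pre ++ k :: suf).Nodup := hnd.of_cons
          rw [List.nodup_append] at this
          exact this.2.2 k h k (by simp) rfl
      have hcyc0 : 0 ≤ mcrE α d k (j :: pre) + mcrW α d (mcrL k (j :: pre)) k := by
        apply cyc pre k j
        exact List.nodup_cons.mpr ⟨hknotjpre, hjpre⟩
      -- decompose wt j (pre ++ k :: suf)
      have hdecomp : wt j (pre ++ k :: suf)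
          = mcrE α d j (pre ++ [k]) + wt k suf := by
        simp only [hwt]
        rw [mcrE_append_cons α d, mcrL_append_cons]
        ring
      have hEsplit : mcrE α d j (pre ++ [k])
          = mcrE α d j pre + mcrW α d (mcrL j pre) k := mcrE_append_singleton α d pre j k
      have hEcyc : mcrE α d k (j :: pre) = mcrW α d k j + mcrE α d j pre := rfl
      have hLcyc : mcrL k (j :: pre) = mcrL j pre := rfl
      have hqk : q k ≤ wt k suf := q_le k suf hksuf
      rw [hval, hdecomp, hEsplit]
      rw [hEcyc, hLcyc] at hcyc0
      linarith
    · -- prepend k to the optimal path from j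
      have hnd2 : (k :: j :: L).Nodup := List.nodup_cons.mpr ⟨hk, hnd⟩
      have := q_le k (j :: L) hnd2
      have hwteq : wt k (j :: L) = mcrW α d k j + wt j L := by
        simp only [hwt]
        have h1 : mcrE α d k (j :: L) = mcrW α d k j + mcrE α d j L := rfl
        have h2 : mcrL k (j :: L) = mcrL j L := rfl
        rw [h1, h2]; ring
      rw [hwteq, ← hval] at this
      exact this
  -- Step 3: the potential on all vertices, and the edge inequality
  set P : ((Σ k : Fin K, S k) ⊕ Unit) → ℝ :=
    fun v => match v with
      | .inl ⟨k, _⟩ => -q k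
      | .inr _ => 0 with hP
  have edge_le : ∀ a b, P b - P a ≤ len a b := by
    rintro (⟨k, lk⟩ | u) (⟨j, lj⟩ | u')
    · by_cases hkj : k = j
      · subst hkj
        rw [h1a k lk lj]
        simp [hP]
      · rw [h1b k j lk lj hkj]
        have h1 : q k ≤ mcrW α d k j + q j := q_tri k j hkj
        have h2 : mcrW α d k j ≤ α k lk k - α k lk j - d k := mcrW_le α d k j lk
        simp only [hP]
        linarith
    · cases u'
      rw [h1c k lk]
      have h1 : q k ≤ mcrA α d k := q_le_A k
      have h2 : mcrA α d k ≤ α k lk k - d k := mcrA_le α d k lk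
      simp only [hP]
      linarith
    · cases u
      rw [h1d j lj]
      have := q_nonneg j
      simp only [hP]
      linarith
    · cases u; cases u'
      rw [h1e]
      simp [hP]
  -- Step 4: telescoping
  have tel : ∀ (m : ℕ) (f : Fin (m + 1) → ℝ),
      ∑ i : Fin m, (f i.succ - f i.castSucc) = f (Fin.last m) - f 0 := by
    intro m
    induction m with
    | zero => intro f; simp
    | succ m ih =>
      intro f
      rw [Fin.sum_univ_castSucc]
      have h1 : ∀ i : Fin m, f i.succ.castSucc - f i.castSucc.castSucc
          = (f ∘ Fin.castSucc) i.succ - (f ∘ Fin.castSucc) i.castSucc := by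
        intro i
        rfl
      have h2 : ∀ i : Fin m, f i.succ.castSucc = f i.castSucc.succ := by
        intro i; rw [Fin.succ_castSucc]
      have hcongr : ∀ i : Fin m, f i.castSucc.succ - f i.castSucc.castSucc
          = (f ∘ Fin.castSucc) i.succ - (f ∘ Fin.castSucc) i.castSucc := by
        intro i
        rw [← h2 i]
        exact h1 i
      rw [Finset.sum_congr rfl (fun i _ => hcongr i), ih (f ∘ Fin.castSucc)]
      simp only [Function.comp_apply, Fin.succ_last, Fin.castSucc_zero]
      ring
  intro m c hc
  have hsum : ∑ i : Fin m, (P (c i.succ) - P (c i.castSucc))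
      ≤ ∑ i : Fin m, len (c i.castSucc) (c i.succ) :=
    Finset.sum_le_sum fun i _ => edge_le (c i.castSucc) (c i.succ)
  have htel : ∑ i : Fin m, (P (c i.succ) - P (c i.castSucc)) = P (c (Fin.last m)) - P (c 0) :=
    tel m (P ∘ c)
  rw [htel, hc] at hsum
  simpa using hsum
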